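/- The cardinal 2^{ℵ₀} is not in WCS(L^{II}): there is a <2^{ℵ₀}-satisfiable full second-order theory in a signature of size 2^{ℵ₀} with no model. -/
import Mathlib


/-- Terms of (monadic, full) second-order logic over a signature with constants
`C` and one binary relation: first-order variables and constants. -/
inductive SOTerm (C : Type) (n : ℕ) : Type
  | var : Fin n → SOTerm C n
  | const : C → SOTerm C n

/-- Formulas of (monadic, full) second-order logic `L^II` over a signature with
constants `C` and one binary relation `E`, with `n` free first-order variables and
`m` free (monadic) second-order variables. -/
inductive SOForm (C : Type) : ℕ → ℕ → Type
  | rel {n m} : SOTerm C n → SOTerm C n → SOForm C n m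
  | eq {n m} : SOTerm C n → SOTerm C n → SOForm C n m
  | inSO {n m} : SOTerm C n → Fin m → SOForm C n m
  | not {n m} : SOForm C n m → SOForm C n m
  | and {n m} : SOForm C n m → SOForm C n m → SOForm C n m
  | all {n m} : SOForm C (n + 1) m → SOForm C n m
  | allSO {n m} : SOForm C n (m + 1) → SOForm C n m

/-- Value of a term under interpretations of the constants and a valuation. -/
def SOTerm.val {C : Type} {A : Type u} (cI : C → A) {n : ℕ} (v : Fin n → A) : SOTerm C n → A
  | .var i => v i
  | .const c => cI c

/-- Full second-order satisfaction: second-order quantifiers range over **all**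
subsets of the domain. -/
def SOForm.Realize {C : Type} {A : Type u} (cI : C → A) (E : A → A → Prop) :
    ∀ {n m : ℕ}, SOForm C n m → (Fin n → A) → (Fin m → Set A) → Prop
  | _, _, .rel t₁ t₂, v, _ => E (t₁.val cI v) (t₂.val cI v)
  | _, _, .eq t₁ t₂, v, _ => t₁.val cI v = t₂.val cI v
  | _, _, .inSO t i, v, w => t.val cI v ∈ w i
  | _, _, .not φ, v, w => ¬ φ.Realize cI E v w
  | _, _, .and φ ψ, v, w => φ.Realize cI E v w ∧ ψ.Realize cI E v w
  | _, _, .all φ, v, w => ∀ a : A, φ.Realize cI E (Fin.snoc v a) w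
  | _, _, .allSO φ, v, w => ∀ X : Set A, φ.Realize cI E v (Fin.snoc w X)

/-- Second-order sentences. -/
abbrev SOSent (C : Type) := SOForm C 0 0

/-- The constants of the witness signature: a constant `c_a` for each
`a ∈ 𝒫(ω)` and a further constant `d`. -/
abbrev ConstPω : Type := (Set ℕ) ⊕ Unit

/-- Interpretation of the constants in the standard structure `⟨𝒫(ω), a, ∈⟩_{a∈𝒫(ω)}`,
with `d` interpreted as `dv`. -/
def stdConst (dv : Set ℕ) : ConstPω → Set ℕ := fun c => Sum.elim id (fun _ => dv) c

/-- Membership on `𝒫(ω)`: `x ∈ y` iff `x` is the von Neumann natural `n` and `n ∈ y`. -/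
def stdMem : Set ℕ → Set ℕ → Prop := fun x y => ∃ n : ℕ, x = Set.Iio n ∧ n ∈ y

/-- The witness theory: the full second-order theory of `⟨𝒫(ω), a, ∈⟩_{a∈𝒫(ω)}`
(all sentences holding under every interpretation of `d`), together with the
sentences `d ≠ c_a` for every `a ∈ 𝒫(ω)`. -/
def TPω : Set (SOSent ConstPω) :=
  {φ | ∀ dv : Set ℕ, φ.Realize (stdConst dv) stdMem Fin.elim0 Fin.elim0} ∪
  {φ | ∃ a : Set ℕ,
    φ = .not (.eq (.const (Sum.inr ())) (.const (Sum.inl a)))}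

namespace SOAux

open Set

@[simp] lemma finv_1_0 : ((OfNat.ofNat 0 : Fin 1)).val = 0 := rfl
@[simp] lemma finv_2_0 : ((OfNat.ofNat 0 : Fin 2)).val = 0 := rfl
@[simp] lemma finv_2_1 : ((OfNat.ofNat 1 : Fin 2)).val = 1 := rfl
@[simp] lemma finv_3_0 : ((OfNat.ofNat 0 : Fin 3)).val = 0 := rfl
@[simp] lemma finv_3_1 : ((OfNat.ofNat 1 : Fin 3)).val = 1 := rfl
@[simp] lemma finv_3_2 : ((OfNat.ofNat 2 : Fin 3)).val = 2 := rfl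
@[simp] lemma finv_4_0 : ((OfNat.ofNat 0 : Fin 4)).val = 0 := rfl
@[simp] lemma finv_4_1 : ((OfNat.ofNat 1 : Fin 4)).val = 1 := rfl
@[simp] lemma finv_4_2 : ((OfNat.ofNat 2 : Fin 4)).val = 2 := rfl
@[simp] lemma finv_4_3 : ((OfNat.ofNat 3 : Fin 4)).val = 3 := rfl
@[simp] lemma finv_5_0 : ((OfNat.ofNat 0 : Fin 5)).val = 0 := rfl
@[simp] lemma finv_5_1 : ((OfNat.ofNat 1 : Fin 5)).val = 1 := rfl
@[simp] lemma finv_5_2 : ((OfNat.ofNat 2 : Fin 5)).val = 2 := rfl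
@[simp] lemma finv_5_3 : ((OfNat.ofNat 3 : Fin 5)).val = 3 := rfl
@[simp] lemma finv_5_4 : ((OfNat.ofNat 4 : Fin 5)).val = 4 := rfl

/-- implication -/
def impF {C : Type} {n m : ℕ} (φ ψ : SOForm C n m) : SOForm C n m := .not (.and φ (.not ψ))
/-- biconditional -/
def iffF {C : Type} {n m : ℕ} (φ ψ : SOForm C n m) : SOForm C n m := .and (impF φ ψ) (impF ψ φ)
/-- disjunction -/
def orF {C : Type} {n m : ℕ} (φ ψ : SOForm C n m) : SOForm C n m := .not (.and (.not φ) (.not ψ))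

/-- extensionality -/
def extS : SOSent ConstPω :=
  .all (.all (impF (.all (iffF (.rel (.var ⟨2, by omega⟩) (.var ⟨0, by omega⟩)) (.rel (.var ⟨2, by omega⟩) (.var ⟨1, by omega⟩))))
    (.eq (.var ⟨0, by omega⟩) (.var ⟨1, by omega⟩))))

/-- every member of anything is a von Neumann natural (inductive) -/
def memNatS : SOSent ConstPω :=
  .all (.all (impF (.rel (.var ⟨0, by omega⟩) (.var ⟨1, by omega⟩))
    (.allSO (impF (.and
      (.all (impF (.all (.not (.rel (.var ⟨3, by omega⟩) (.var ⟨2, by omega⟩)))) (.inSO (.var ⟨2, by omega⟩) 0)))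
      (.all (.all (impF (.and (.inSO (.var ⟨2, by omega⟩) 0)
        (.all (iffF (.rel (.var ⟨4, by omega⟩) (.var ⟨3, by omega⟩))
          (orF (.rel (.var ⟨4, by omega⟩) (.var ⟨2, by omega⟩)) (.eq (.var ⟨4, by omega⟩) (.var ⟨2, by omega⟩))))))
        (.inSO (.var ⟨3, by omega⟩) 0)))))
      (.inSO (.var ⟨0, by omega⟩) 0)))))

/-- the unique memberless element is `c_∅` -/
def zeroS : SOSent ConstPω :=
  .all (impF (.all (.not (.rel (.var ⟨1, by omega⟩) (.var ⟨0, by omega⟩))))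
    (.eq (.var ⟨0, by omega⟩) (.const (Sum.inl (∅ : Set ℕ)))))

/-- the successor of `c_{Iio n}` is `c_{Iio (n+1)}` -/
def succS (n : ℕ) : SOSent ConstPω :=
  .all (impF (.all (iffF (.rel (.var ⟨1, by omega⟩) (.var ⟨0, by omega⟩))
      (orF (.rel (.var ⟨1, by omega⟩) (.const (Sum.inl (Set.Iio n))))
        (.eq (.var ⟨1, by omega⟩) (.const (Sum.inl (Set.Iio n)))))))
    (.eq (.var ⟨0, by omega⟩) (.const (Sum.inl (Set.Iio (n+1))))))

/-- atomic membership sentence `c_{Iio n} E c_a` -/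
def memS (n : ℕ) (a : Set ℕ) : SOSent ConstPω :=
  .rel (.const (Sum.inl (Set.Iio n))) (.const (Sum.inl a))

lemma realize_extS {A : Type u} (cI : ConstPω → A) (E : A → A → Prop) :
    extS.Realize cI E Fin.elim0 Fin.elim0 ↔
      ∀ x y : A, (∀ z, E z x ↔ E z y) → x = y := by
  simp [extS, impF, iffF, SOForm.Realize, SOTerm.val, Fin.snoc, Fin.castLT,
    iff_iff_implies_and_implies]

set_option maxHeartbeats 1000000 in
lemma realize_memNatS {A : Type u} (cI : ConstPω → A) (E : A → A → Prop) :
    memNatS.Realize cI E Fin.elim0 Fin.elim0 ↔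
      ∀ z y : A, E z y → ∀ X : Set A,
        ((∀ u, (∀ w, ¬ E w u) → u ∈ X) ∧
         (∀ u v, (u ∈ X ∧ ∀ z', (E z' v ↔ (E z' u ∨ z' = u))) → v ∈ X)) → z ∈ X := by
  simp [memNatS, impF, iffF, orF, SOForm.Realize, SOTerm.val, Fin.snoc, Fin.castLT,
    iff_iff_implies_and_implies, or_iff_not_imp_left]

lemma realize_zeroS {A : Type u} (cI : ConstPω → A) (E : A → A → Prop) :
    zeroS.Realize cI E Fin.elim0 Fin.elim0 ↔
      ∀ z : A, (∀ w, ¬ E w z) → z = cI (Sum.inl (∅ : Set ℕ)) := by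
  simp [zeroS, impF, SOForm.Realize, SOTerm.val, Fin.snoc, Fin.castLT]

lemma realize_succS {A : Type u} (cI : ConstPω → A) (E : A → A → Prop) (n : ℕ) :
    (succS n).Realize cI E Fin.elim0 Fin.elim0 ↔
      ∀ v : A, (∀ z, E z v ↔ (E z (cI (Sum.inl (Set.Iio n))) ∨ z = cI (Sum.inl (Set.Iio n))))
        → v = cI (Sum.inl (Set.Iio (n+1))) := by
  simp [succS, impF, iffF, orF, SOForm.Realize, SOTerm.val, Fin.snoc, Fin.castLT,
    iff_iff_implies_and_implies, or_iff_not_imp_left]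

lemma realize_memS {A : Type u} (cI : ConstPω → A) (E : A → A → Prop) (n : ℕ) (a : Set ℕ) :
    (memS n a).Realize cI E Fin.elim0 Fin.elim0 ↔
      E (cI (Sum.inl (Set.Iio n))) (cI (Sum.inl a)) := Iff.rfl

lemma realize_notS {A : Type u} (cI : ConstPω → A) (E : A → A → Prop) (φ : SOSent ConstPω) :
    (SOForm.not φ).Realize cI E Fin.elim0 Fin.elim0 ↔
      ¬ φ.Realize cI E Fin.elim0 Fin.elim0 := Iff.rfl

/-! ### truth in the standard model -/

lemma stdMem_Iio {k : ℕ} {y : Set ℕ} : stdMem (Set.Iio k) y ↔ k ∈ y := by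
  constructor
  · rintro ⟨n, hn, hny⟩
    rwa [Set.Iio_injective hn]
  · exact fun h => ⟨k, rfl, h⟩

lemma std_ext : ∀ x y : Set ℕ, (∀ z, stdMem z x ↔ stdMem z y) → x = y := by
  intro x y h
  ext k
  have := h (Set.Iio k)
  rw [stdMem_Iio, stdMem_Iio] at this
  exact this

lemma std_memNat : ∀ z y : Set ℕ, stdMem z y → ∀ X : Set (Set ℕ),
    ((∀ u, (∀ w, ¬ stdMem w u) → u ∈ X) ∧
     (∀ u v, (u ∈ X ∧ ∀ z', (stdMem z' v ↔ (stdMem z' u ∨ z' = u))) → v ∈ X)) → z ∈ X := by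
  rintro z y ⟨n, rfl, -⟩ X ⟨h0, hs⟩
  clear y
  induction n with
  | zero =>
    apply h0
    rintro w ⟨k, -, hk⟩
    exact Nat.not_lt_zero k hk
  | succ n ih =>
    apply hs (Set.Iio n) (Set.Iio (n+1))
    refine ⟨ih, fun z' => ?_⟩
    constructor
    · rintro ⟨k, rfl, hk⟩
      rcases Nat.lt_succ_iff_lt_or_eq.mp hk with hk' | rfl
      · exact Or.inl ⟨k, rfl, hk'⟩
      · exact Or.inr rfl
    · rintro (⟨k, rfl, hk⟩ | rfl)
      · exact ⟨k, rfl, Nat.lt_succ_of_lt hk⟩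
      · exact ⟨n, rfl, Nat.lt_succ_self n⟩

lemma std_zero : ∀ z : Set ℕ, (∀ w, ¬ stdMem w z) → z = (∅ : Set ℕ) := by
  intro z h
  ext k
  simp only [Set.mem_empty_iff_false, iff_false]
  exact fun hk => h (Set.Iio k) ⟨k, rfl, hk⟩

lemma std_succ (n : ℕ) : ∀ v : Set ℕ,
    (∀ z, stdMem z v ↔ (stdMem z (Set.Iio n) ∨ z = Set.Iio n)) → v = Set.Iio (n+1) := by
  intro v h
  ext k
  have := h (Set.Iio k)
  rw [stdMem_Iio, stdMem_Iio] at this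
  simp only [Set.mem_Iio]
  rw [this]
  constructor
  · rintro (hk | hk)
    · exact Nat.lt_succ_of_lt hk
    · rw [Set.Iio_injective hk]; exact Nat.lt_succ_self n
  · intro hk
    rcases Nat.lt_succ_iff_lt_or_eq.mp hk with hk' | rfl
    · exact Or.inl hk'
    · exact Or.inr rfl

lemma extS_mem : extS ∈ TPω :=
  Or.inl fun dv => (realize_extS _ _).mpr std_ext

lemma memNatS_mem : memNatS ∈ TPω :=
  Or.inl fun dv => (realize_memNatS _ _).mpr std_memNat

lemma zeroS_mem : zeroS ∈ TPω :=
  Or.inl fun dv => (realize_zeroS _ _).mpr std_zero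

lemma succS_mem (n : ℕ) : succS n ∈ TPω :=
  Or.inl fun dv => (realize_succS _ _ n).mpr (std_succ n)

lemma memS_mem {n : ℕ} {a : Set ℕ} (h : n ∈ a) : memS n a ∈ TPω :=
  Or.inl fun dv => (realize_memS _ _ n a).mpr (stdMem_Iio.mpr h)

lemma nmemS_mem {n : ℕ} {a : Set ℕ} (h : n ∉ a) : SOForm.not (memS n a) ∈ TPω :=
  Or.inl fun dv => (realize_notS _ _ _).mpr (fun hh => h (stdMem_Iio.mp hh))

end SOAux

open SOAux

/-- Proposition 2.7(2): `2^ℵ₀ ∉ WCS(L^II)`: the theory `TPω`, in a signature of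
size `2^ℵ₀`, is `< 2^ℵ₀`-satisfiable but has no model (in any universe). -/
theorem stmt17 :
    Cardinal.mk ConstPω = 2 ^ Cardinal.aleph0 ∧
    (∀ T₀ ⊆ TPω, Cardinal.mk ↥T₀ < 2 ^ Cardinal.aleph0 →
      ∃ (A : Type) (cI : ConstPω → A) (E : A → A → Prop),
        ∀ φ ∈ T₀, SOForm.Realize cI E φ Fin.elim0 Fin.elim0) ∧
    ¬ ∃ (A : Type u) (cI : ConstPω → A) (E : A → A → Prop),
        ∀ φ ∈ TPω, SOForm.Realize cI E φ Fin.elim0 Fin.elim0 := by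
  have hset : Cardinal.mk (Set ℕ) = 2 ^ Cardinal.aleph0 := by
    rw [Cardinal.mk_set, Cardinal.mk_nat]
  refine ⟨?_, ?_, ?_⟩
  · have : Cardinal.mk ConstPω = Cardinal.mk (Set ℕ) + Cardinal.mk Unit := by
      simp [Cardinal.mk_sum]
    rw [this, hset]
    have : Cardinal.mk Unit = 1 := Cardinal.mk_eq_one Unit
    rw [this]
    exact Cardinal.add_one_eq (Cardinal.cantor _).le
  · intro T₀ hsub hcard
    set S : Set (Set ℕ) := {a | (SOForm.not (SOForm.eq (SOTerm.const (Sum.inr ()))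
      (SOTerm.const (Sum.inl a))) : SOSent ConstPω) ∈ T₀} with hS
    have hmkS : Cardinal.mk S ≤ Cardinal.mk T₀ := by
      apply Cardinal.mk_le_of_injective
        (f := fun a : S => (⟨_, a.2⟩ : T₀))
      intro a b hab
      simp only [Subtype.mk.injEq, SOForm.not.injEq, SOForm.eq.injEq,
        SOTerm.const.injEq, Sum.inl.injEq] at hab
      exact Subtype.ext hab.2
    have hne : S ≠ Set.univ := by
      intro h
      have : Cardinal.mk S = 2 ^ Cardinal.aleph0 := by
        rw [h, Cardinal.mk_univ, hset]
      rw [this] at hmkS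
      exact absurd hmkS (not_le.mpr hcard)
    obtain ⟨dv, hdv⟩ := (Set.ne_univ_iff_exists_notMem _).mp hne
    refine ⟨Set ℕ, stdConst dv, stdMem, ?_⟩
    intro φ hφ
    rcases hsub hφ with hl | ⟨a, rfl⟩
    · exact hl dv
    · intro heq
      have : dv = a := heq
      exact hdv (hS ▸ (this ▸ hφ))
  · rintro ⟨A, cI, E, h⟩
    have hExt := (realize_extS cI E).mp (h _ extS_mem)
    have hMemNat := (realize_memNatS cI E).mp (h _ memNatS_mem)
    have hZero := (realize_zeroS cI E).mp (h _ zeroS_mem)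
    have hSucc := fun n => (realize_succS cI E n).mp (h _ (succS_mem n))
    have hMem : ∀ {n : ℕ} {a : Set ℕ}, n ∈ a →
        E (cI (Sum.inl (Set.Iio n))) (cI (Sum.inl a)) :=
      fun {n a} hna => (realize_memS cI E n a).mp (h _ (memS_mem hna))
    have hNMem : ∀ {n : ℕ} {a : Set ℕ}, n ∉ a →
        ¬ E (cI (Sum.inl (Set.Iio n))) (cI (Sum.inl a)) :=
      fun {n a} hna he => (h _ (nmemS_mem hna)) he
    have hnat : ∀ z y : A, E z y → z ∈ Set.range (fun n : ℕ => cI (Sum.inl (Set.Iio n))) := by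
      intro z y hzy
      apply hMemNat z y hzy
      constructor
      · intro u hu
        refine ⟨0, ?_⟩
        show cI (Sum.inl (Set.Iio 0)) = u
        have h0 : (Set.Iio 0 : Set ℕ) = ∅ := by ext k; simp
        rw [h0, hZero u hu]
      · rintro u v ⟨⟨n, rfl⟩, hv⟩
        exact ⟨n + 1, (hSucc n v hv).symm⟩
    set dv : Set ℕ := {n | E (cI (Sum.inl (Set.Iio n))) (cI (Sum.inr ()))} with hdvdef
    have key : cI (Sum.inr ()) = cI (Sum.inl dv) := by
      apply hExt
      intro z
      constructor
      · intro hz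
        obtain ⟨n, rfl⟩ := hnat z _ hz
        exact hMem (show n ∈ dv from hz)
      · intro hz
        obtain ⟨n, rfl⟩ := hnat z _ hz
        have hn : n ∈ dv := by
          by_contra hn
          exact hNMem hn hz
        exact hn
    exact (h _ (Or.inr ⟨dv, rfl⟩)) key
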